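/- Let H be a Hilbert space, u^1, …, u^m ∈ H snapshots, K their Gram matrix with positive eigenvalues λ₁ ≥ … ≥ λ_d > 0 and orthonormal eigenvectors x₁,…,x_d ∈ ℝ^m, and φ_k the associated POD modes. Then Σ_{j=1}^m ‖u^j − Σ_{k=1}^r ⟨u^j, φ_k⟩ φ_k‖² = Σ_{k=r+1}^d λ_k for every 0 ≤ r ≤ d. -/

import Mathlib

/-- POD truncation error identity: if `K_{ij} = ⟨u^i, u^j⟩` has the spectral
decomposition `K = Σ_k λ_k x_k x_kᵀ` with positive eigenvalues `λ_k` and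
orthonormal eigenvectors `x_k`, and `φ_k = (1/√λ_k) Σ_j (x_k)_j u^j` are the
POD modes, then for every `r ≤ d`,
`Σ_j ‖u^j − Σ_{k≤r} ⟨u^j, φ_k⟩ φ_k‖² = Σ_{k>r} λ_k`. -/
theorem stmt_19 {H : Type*} [NormedAddCommGroup H] [InnerProductSpace ℝ H]
    (m d : ℕ) (u : Fin m → H) (K : Matrix (Fin m) (Fin m) ℝ)
    (hK : ∀ i j, K i j = (inner ℝ (u i) (u j) : ℝ))
    (lam : Fin d → ℝ) (x : Fin d → (Fin m → ℝ))
    (hpos : ∀ k, 0 < lam k)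
    (heig : ∀ k, K.mulVec (x k) = lam k • x k)
    (horth : ∀ k l, ∑ j, x k j * x l j = if k = l then (1 : ℝ) else 0)
    (hspec : ∀ i j, K i j = ∑ k, lam k * x k i * x k j)
    (φ : Fin d → H)
    (hφ : ∀ k, φ k = (Real.sqrt (lam k))⁻¹ • ∑ j, x k j • u j)
    (r : ℕ) (hr : r ≤ d) :
    ∑ j : Fin m, ‖u j - ∑ k ∈ Finset.univ.filter (fun k : Fin d => (k : ℕ) < r),
        (inner ℝ (u j) (φ k) : ℝ) • φ k‖ ^ 2 =
      ∑ k ∈ Finset.univ.filter (fun k : Fin d => r ≤ (k : ℕ)), lam k := by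
  have hsq : ∀ k, Real.sqrt (lam k) * Real.sqrt (lam k) = lam k :=
    fun k => Real.mul_self_sqrt (hpos k).le
  have hsne : ∀ k, Real.sqrt (lam k) ≠ 0 :=
    fun k => ne_of_gt (Real.sqrt_pos.mpr (hpos k))
  -- inner products with the modes
  have hin : ∀ j k, (inner ℝ (u j) (φ k) : ℝ) = Real.sqrt (lam k) * x k j := by
    intro j k
    have hm := congrFun (heig k) j
    simp only [Matrix.mulVec, dotProduct, Pi.smul_apply, smul_eq_mul] at hm
    rw [hφ, real_inner_smul_right, inner_sum]
    simp only [real_inner_smul_right]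
    have h1 : ∑ i, x k i * (inner ℝ (u j) (u i) : ℝ) = ∑ i, K j i * x k i := by
      refine Finset.sum_congr rfl fun i _ => ?_
      rw [hK]; ring
    rw [h1, hm, inv_mul_eq_div, div_eq_iff (hsne k)]
    linear_combination (-(x k j)) * hsq k
  -- orthonormality of the modes
  have hob : ∀ k l, (inner ℝ (φ k) (φ l) : ℝ) = if k = l then (1 : ℝ) else 0 := by
    intro k l
    rw [hφ k, real_inner_smul_left, sum_inner]
    simp only [real_inner_smul_left, hin]
    have h1 : ∑ i, x k i * (Real.sqrt (lam l) * x l i)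
        = Real.sqrt (lam l) * ∑ i, x k i * x l i := by
      rw [Finset.mul_sum]; exact Finset.sum_congr rfl fun i _ => by ring
    rw [h1, horth]
    by_cases h : k = l
    · subst h
      simp [inv_mul_cancel₀ (hsne k)]
    · simp [h]
  set S := Finset.univ.filter (fun k : Fin d => (k : ℕ) < r) with hS
  -- per-snapshot expansion
  have hnorm : ∀ j : Fin m,
      ‖u j - ∑ k ∈ S, (inner ℝ (u j) (φ k) : ℝ) • φ k‖ ^ 2
        = ‖u j‖ ^ 2 - ∑ k ∈ S, lam k * (x k j * x k j) := by
    intro j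
    rw [norm_sub_sq_real]
    have hb : (inner ℝ (u j) (∑ k ∈ S, (inner ℝ (u j) (φ k) : ℝ) • φ k) : ℝ)
        = ∑ k ∈ S, lam k * (x k j * x k j) := by
      rw [inner_sum]
      refine Finset.sum_congr rfl fun k _ => ?_
      rw [real_inner_smul_right, hin]
      linear_combination (x k j * x k j) * hsq k
    have hbb : ‖∑ k ∈ S, (inner ℝ (u j) (φ k) : ℝ) • φ k‖ ^ 2
        = ∑ k ∈ S, lam k * (x k j * x k j) := by
      rw [← real_inner_self_eq_norm_sq, sum_inner]
      have : ∀ k ∈ S, (inner ℝ ((inner ℝ (u j) (φ k) : ℝ) • φ k)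
          (∑ l ∈ S, (inner ℝ (u j) (φ l) : ℝ) • φ l) : ℝ)
          = lam k * (x k j * x k j) := by
        intro k hk
        rw [real_inner_smul_left, inner_sum]
        simp only [real_inner_smul_right, hob, mul_ite, mul_one, mul_zero]
        rw [Finset.sum_ite_eq S k (fun l => (inner ℝ (u j) (φ l) : ℝ)), if_pos hk, hin]
        linear_combination (x k j * x k j) * hsq k
      rw [Finset.sum_congr rfl this]
    rw [hb, hbb]; ring
  have hEj : ∀ j : Fin m, ‖u j‖ ^ 2 = ∑ k, lam k * (x k j * x k j) := by
    intro j
    rw [← real_inner_self_eq_norm_sq, ← hK, hspec]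
    exact Finset.sum_congr rfl fun k _ => by ring
  calc ∑ j : Fin m, ‖u j - ∑ k ∈ S, (inner ℝ (u j) (φ k) : ℝ) • φ k‖ ^ 2
      = ∑ j : Fin m, (∑ k, lam k * (x k j * x k j)
          - ∑ k ∈ S, lam k * (x k j * x k j)) := by
        refine Finset.sum_congr rfl fun j _ => ?_
        rw [hnorm j, hEj j]
    _ = (∑ k, lam k * ∑ j, x k j * x k j)
          - ∑ k ∈ S, lam k * ∑ j, x k j * x k j := by
        rw [Finset.sum_sub_distrib, Finset.sum_comm]
        rw [Finset.sum_comm (s := Finset.univ) (t := S)]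
        simp [Finset.mul_sum]
    _ = (∑ k, lam k) - ∑ k ∈ S, lam k := by
        simp [horth]
    _ = ∑ k ∈ Finset.univ.filter (fun k : Fin d => r ≤ (k : ℕ)), lam k := by
        rw [← Finset.sum_filter_add_sum_filter_not Finset.univ
          (fun k : Fin d => (k : ℕ) < r) lam]
        simp only [not_lt, hS]
        ring
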